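/- Let R be a unital ring with 2 invertible and A = Mₙ(R), n ≥ 2. If T: A → A is a surjective additive map such that T(x)∘T(y) = 0 whenever xy = yx = 0, then T is a weighted Jordan homomorphism. -/

import Mathlib

namespace Stmt6Proof
open Matrix

local notation "E" => Matrix.single

variable {R : Type*} [Ring R] {n : ℕ}

def fB (T : Matrix (Fin n) (Fin n) R → Matrix (Fin n) (Fin n) R)
    (x y : Matrix (Fin n) (Fin n) R) : Matrix (Fin n) (Fin n) R :=
  T x * T y + T y * T x

section Basic
variable (T : Matrix (Fin n) (Fin n) R → Matrix (Fin n) (Fin n) R)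

theorem fB_symm (x y : Matrix (Fin n) (Fin n) R) : fB T x y = fB T y x :=
  add_comm _ _

variable (hadd : ∀ x y, T (x + y) = T x + T y)
include hadd

theorem t0 : T 0 = 0 := by
  have h : T 0 + T 0 = T 0 + 0 := by rw [add_zero, ← hadd, add_zero]
  exact add_left_cancel h

theorem tneg (x : Matrix (Fin n) (Fin n) R) : T (-x) = -T x := by
  have h : T x + T (-x) = 0 := by rw [← hadd, add_neg_cancel, t0 T hadd]
  rw [eq_neg_iff_add_eq_zero, add_comm]
  exact h

theorem fB_add_left (x x' y : Matrix (Fin n) (Fin n) R) :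
    fB T (x + x') y = fB T x y + fB T x' y := by
  simp only [fB, hadd, add_mul, mul_add]; abel

theorem fB_add_right (x y y' : Matrix (Fin n) (Fin n) R) :
    fB T x (y + y') = fB T x y + fB T x y' := by
  simp only [fB, hadd, add_mul, mul_add]; abel

theorem fB_neg_left (x y : Matrix (Fin n) (Fin n) R) :
    fB T (-x) y = -fB T x y := by
  simp only [fB, tneg T hadd, neg_mul, mul_neg, neg_add]

theorem fB_neg_right (x y : Matrix (Fin n) (Fin n) R) :
    fB T x (-y) = -fB T x y := by
  simp only [fB, tneg T hadd, neg_mul, mul_neg, neg_add]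

theorem tsum {ι : Type*} (s : Finset ι) (g : ι → Matrix (Fin n) (Fin n) R) :
    T (∑ i ∈ s, g i) = ∑ i ∈ s, T (g i) :=
  map_sum (AddMonoidHom.mk' T hadd) g s

end Basic

section Units
variable (T : Matrix (Fin n) (Fin n) R → Matrix (Fin n) (Fin n) R)
variable (hadd : ∀ x y, T (x + y) = T x + T y)
variable (hz : ∀ x y : Matrix (Fin n) (Fin n) R,
    x * y = 0 → y * x = 0 → T x * T y + T y * T x = 0)

include hz in
theorem hzf {x y : Matrix (Fin n) (Fin n) R} (h1 : x * y = 0) (h2 : y * x = 0) :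
    fB T x y = 0 := hz x y h1 h2

include hz in
theorem F1 (i j k l : Fin n) (hjk : j ≠ k) (hli : l ≠ i) (r s : R) :
    fB T (E i j r) (E k l s) = 0 :=
  hzf T hz (single_mul_single_of_ne _ _ _ _ hjk _) (single_mul_single_of_ne _ _ _ _ hli _)

include hadd hz in
theorem source2 (i j : Fin n) (hij : i ≠ j) (a b s t : R) (h : b * s = a * t) :
    fB T (E i j b) (E j j s) = fB T (E i i a) (E i j t) := by
  have hx : (E i i a + E i j b) * (E j j s + -(E i j t)) = 0 := by
    simp only [mul_add, add_mul, mul_neg, single_mul_single_same,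
      single_mul_single_of_ne _ _ _ _ hij, single_mul_single_of_ne _ _ _ _ hij.symm, h]
    abel
  have hy : (E j j s + -(E i j t)) * (E i i a + E i j b) = 0 := by
    simp only [mul_add, add_mul, neg_mul, single_mul_single_same,
      single_mul_single_of_ne _ _ _ _ hij, single_mul_single_of_ne _ _ _ _ hij.symm]
    abel
  have h0 := hzf T hz hx hy
  rw [fB_add_left T hadd, fB_add_right T hadd, fB_add_right T hadd,
    fB_neg_right T hadd, fB_neg_right T hadd,
    F1 T hz i i j j hij hij.symm, F1 T hz i j i j hij.symm hij.symm] at h0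
  rw [← sub_eq_zero]
  abel_nf at h0 ⊢
  exact h0

include hadd hz in
theorem source3 (i j : Fin n) (hij : i ≠ j) (a b s t : R) (h : s * b = t * a) :
    fB T (E j i b) (E j j s) = fB T (E i i a) (E j i t) := by
  have hx : (E i i a + E j i b) * (E j j s + -(E j i t)) = 0 := by
    simp only [mul_add, add_mul, mul_neg, single_mul_single_same,
      single_mul_single_of_ne _ _ _ _ hij, single_mul_single_of_ne _ _ _ _ hij.symm]
    abel
  have hy : (E j j s + -(E j i t)) * (E i i a + E j i b) = 0 := by
    simp only [mul_add, add_mul, neg_mul, single_mul_single_same,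
      single_mul_single_of_ne _ _ _ _ hij, single_mul_single_of_ne _ _ _ _ hij.symm, h]
    abel
  have h0 := hzf T hz hx hy
  rw [fB_add_left T hadd, fB_add_right T hadd, fB_add_right T hadd,
    fB_neg_right T hadd, fB_neg_right T hadd,
    F1 T hz i i j j hij hij.symm, F1 T hz j i j i hij hij] at h0
  rw [← sub_eq_zero]
  abel_nf at h0 ⊢
  exact h0

end Units

/-- `g i j w = fB (E i j w) (E j j 1)`, the basic off-diagonal value. -/
def gV (T : Matrix (Fin n) (Fin n) R → Matrix (Fin n) (Fin n) R)
    (i j : Fin n) (w : R) : Matrix (Fin n) (Fin n) R :=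
  fB T (E i j w) (E j j 1)

section ULemmas
variable (T : Matrix (Fin n) (Fin n) R → Matrix (Fin n) (Fin n) R)
variable (hadd : ∀ x y, T (x + y) = T x + T y)
variable (hz : ∀ x y : Matrix (Fin n) (Fin n) R,
    x * y = 0 → y * x = 0 → T x * T y + T y * T x = 0)
variable {i j : Fin n} (hij : i ≠ j)
include hadd hz hij

theorem U1 (w s : R) : fB T (E i j w) (E j j s) = gV T i j (w * s) := by
  rw [source2 T hadd hz i j hij 1 w s (w*s) (by rw [one_mul]),
    ← source2 T hadd hz i j hij 1 (w*s) 1 (w*s) (by rw [mul_one, one_mul]), gV]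

theorem U2 (s w : R) : fB T (E i i s) (E i j w) = gV T i j (s * w) := by
  rw [← source2 T hadd hz i j hij s (s*w) 1 w (by rw [mul_one]), gV]

theorem U3 (w s : R) : fB T (E i j w) (E i i s) = gV T i j (s * w) := by
  have k1 : ∀ v : R, fB T (E i j v) (E i i 1) = fB T (E j j 1) (E i j v) := by
    intro v
    exact source3 T hadd hz j i hij.symm 1 v 1 v (by rw [one_mul, mul_one])
  have h1 : fB T (E i j w) (E i i s) = fB T (E j j 1) (E i j (s*w)) :=
    source3 T hadd hz j i hij.symm 1 w s (s*w) (by rw [mul_one])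
  rw [h1, ← k1 (s*w), fB_symm, U2 T hadd hz hij 1 (s*w), one_mul]

theorem U4 (a t : R) : fB T (E j j a) (E i j t) = gV T i j (t * a) := by
  have h1 : fB T (E i j (t*a)) (E i i 1) = fB T (E j j a) (E i j t) :=
    source3 T hadd hz j i hij.symm a (t*a) 1 t (by rw [one_mul])
  rw [← h1, U3 T hadd hz hij (t*a) 1, one_mul]

omit hij in
theorem F4 {l : Fin n} (hjl : j ≠ l) (hil : i ≠ l) (r s : R) :
    fB T (E i j r) (E j l s) = gV T i l (r * s) := by
  have hx : (E i j r + -(E i l (r*s))) * (E j l s + E l l 1) = 0 := by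
    simp only [mul_add, add_mul, neg_mul, single_mul_single_same,
      single_mul_single_of_ne _ _ _ _ hjl, single_mul_single_of_ne _ _ _ _ hjl.symm, mul_one]
    abel
  have hy : (E j l s + E l l 1) * (E i j r + -(E i l (r*s))) = 0 := by
    simp only [mul_add, add_mul, mul_neg, single_mul_single_same,
      single_mul_single_of_ne _ _ _ _ hil.symm]
    abel
  have h0 := hzf T hz hx hy
  rw [fB_add_left T hadd, fB_add_right T hadd, fB_add_right T hadd,
    fB_neg_left T hadd, fB_neg_left T hadd,
    F1 T hz i j l l hjl hil.symm, F1 T hz i l j l (fun h => hjl h.symm) hil.symm] at h0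
  have : fB T (E i j r) (E j l s) = fB T (E i l (r*s)) (E l l 1) := by
    rw [← sub_eq_zero]
    abel_nf at h0 ⊢
    exact h0
  rw [this, gV]

theorem star (r b p : R) :
    fB T (E i i 1) (E i i (r*(b*p))) + fB T (E j j (p*r)) (E j j b)
      = fB T (E i j r) (E j i (b*p)) + fB T (E i j (r*b)) (E j i p) := by
  have hx : (E i i 1 + E i j r + E j i p + E j j (p*r)) *
      (E i i (r*(b*p)) + -(E i j (r*b)) + -(E j i (b*p)) + E j j b) = 0 := by
    simp only [mul_add, add_mul, mul_neg, neg_mul, single_mul_single_same,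
      single_mul_single_of_ne _ _ _ _ hij, single_mul_single_of_ne _ _ _ _ hij.symm,
      one_mul, mul_one, mul_assoc]
    abel
  have hy : (E i i (r*(b*p)) + -(E i j (r*b)) + -(E j i (b*p)) + E j j b) *
      (E i i 1 + E i j r + E j i p + E j j (p*r)) = 0 := by
    simp only [mul_add, add_mul, mul_neg, neg_mul, single_mul_single_same,
      single_mul_single_of_ne _ _ _ _ hij, single_mul_single_of_ne _ _ _ _ hij.symm,
      one_mul, mul_one, mul_assoc]
    abel
  have h0 := hzf T hz hx hy
  simp only [fB_add_left T hadd, fB_add_right T hadd, fB_neg_left T hadd,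
    fB_neg_right T hadd] at h0
  rw [F1 T hz i i j j hij hij.symm, F1 T hz i j i j hij.symm hij.symm,
    F1 T hz j i j i hij hij, F1 T hz j j i i hij.symm hij] at h0
  rw [U2 T hadd hz hij 1 (r*b), U4 T hadd hz hij.symm 1 (b*p),
    U3 T hadd hz hij r (r*(b*p)), U1 T hadd hz hij r b,
    U1 T hadd hz hij.symm p (r*(b*p)), U3 T hadd hz hij.symm p b,
    U4 T hadd hz hij (p*r) (r*b), U2 T hadd hz hij.symm (p*r) (b*p)] at h0
  simp only [one_mul, mul_one, mul_assoc] at h0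
  rw [fB_symm T (E j i p) (E i j (r*b))] at h0
  rw [← sub_eq_zero]
  abel_nf at h0 ⊢
  exact h0

theorem Mc (r p : R) :
    fB T (E i j r) (E j i p) + fB T (E i j r) (E j i p)
      = fB T (E i i 1) (E i i (r*p)) + fB T (E j j (p*r)) (E j j 1) := by
  have h := star T hadd hz hij r 1 p
  simp only [one_mul, mul_one] at h
  exact h.symm

theorem M3 (r b : R) :
    fB T (E j j r) (E j j b) + fB T (E j j r) (E j j b)
      = fB T (E j j (b*r + r*b)) (E j j 1) := by
  have h1 := star T hadd hz hij r b 1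
  simp only [one_mul, mul_one] at h1
  have h2 := Mc T hadd hz hij r b
  have h3 := Mc T hadd hz hij (r*b) 1
  simp only [one_mul, mul_one] at h3
  have hh : (fB T (E i i 1) (E i i (r*b)) + fB T (E j j r) (E j j b))
      + (fB T (E i i 1) (E i i (r*b)) + fB T (E j j r) (E j j b))
      = (fB T (E i i 1) (E i i (r*b)) + fB T (E j j (b*r)) (E j j 1))
        + (fB T (E i i 1) (E i i (r*b)) + fB T (E j j (r*b)) (E j j 1)) := by
    rw [h1, ← h2, ← h3]; abel
  rw [single_add, fB_add_left T hadd]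
  have hz0 := sub_eq_zero.mpr hh
  rw [← sub_eq_zero]
  abel_nf at hz0 ⊢
  exact hz0

end ULemmas

section Mu
variable (T : Matrix (Fin n) (Fin n) R → Matrix (Fin n) (Fin n) R)
variable (hadd : ∀ x y, T (x + y) = T x + T y)
variable (hz : ∀ x y : Matrix (Fin n) (Fin n) R,
    x * y = 0 → y * x = 0 → T x * T y + T y * T x = 0)

theorem one_sum : (1 : Matrix (Fin n) (Fin n) R) = ∑ m : Fin n, E m m 1 := by
  ext a b
  simp only [Matrix.sum_apply]
  by_cases h : a = b
  · subst h
    rw [Finset.sum_eq_single_of_mem a (Finset.mem_univ a)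
      (fun m _ hm => single_apply_of_ne m m 1 a a (by tauto))]
    simp
  · rw [Finset.sum_eq_zero
      (fun m _ => single_apply_of_ne m m 1 a b (by rintro ⟨rfl, rfl⟩; exact h rfl)), Matrix.one_apply_ne h]

include hadd in
theorem mu_sum (x : Matrix (Fin n) (Fin n) R) :
    T x * T 1 + T 1 * T x = ∑ m : Fin n, fB T x (E m m 1) := by
  rw [one_sum (R := R) (n := n), tsum T hadd, Finset.mul_sum, Finset.sum_mul,
    ← Finset.sum_add_distrib]
  rfl

include hadd hz in
theorem mu_diag (k : Fin n) (v : R) :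
    T (E k k v) * T 1 + T 1 * T (E k k v) = fB T (E k k v) (E k k 1) := by
  rw [mu_sum T hadd]
  exact Finset.sum_eq_single_of_mem k (Finset.mem_univ k)
    (fun m _ hm => F1 T hz k k m m (Ne.symm hm) hm v 1)

include hadd hz in
theorem mu_off {i l : Fin n} (hil : i ≠ l) (v : R) :
    T (E i l v) * T 1 + T 1 * T (E i l v) = gV T i l v + gV T i l v := by
  rw [mu_sum T hadd]
  have hpt : ∀ m : Fin n, fB T (E i l v) (E m m 1) =
      (if m = i then gV T i l v else 0) + (if m = l then gV T i l v else 0) := by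
    intro m
    by_cases h1 : m = i
    · subst h1
      rw [if_pos rfl, if_neg hil, add_zero]
      rw [U3 T hadd hz hil v 1, one_mul]
    · by_cases h2 : m = l
      · subst h2
        rw [if_neg h1, if_pos rfl, zero_add, U1 T hadd hz hil v 1, mul_one]
      · rw [if_neg h1, if_neg h2, add_zero]
        exact F1 T hz i l m m (fun h => h2 h.symm) h1 v 1
  rw [Finset.sum_congr rfl (fun m _ => hpt m), Finset.sum_add_distrib]
  simp [Finset.sum_ite_eq']

end Mu

section GU
variable (T : Matrix (Fin n) (Fin n) R → Matrix (Fin n) (Fin n) R)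
variable (hadd : ∀ x y, T (x + y) = T x + T y)
variable (hz : ∀ x y : Matrix (Fin n) (Fin n) R,
    x * y = 0 → y * x = 0 → T x * T y + T y * T x = 0)
include hadd hz

theorem Gunits (hn : 2 ≤ n) (i j k l : Fin n) (r s : R) :
    fB T (E i j r) (E k l s) + fB T (E i j r) (E k l s)
      = T (E i j r * E k l s + E k l s * E i j r) * T 1
        + T 1 * T (E i j r * E k l s + E k l s * E i j r) := by
  haveI : Nontrivial (Fin n) :=
    ⟨⟨0, by omega⟩, ⟨1, by omega⟩, by simp [Fin.ext_iff]⟩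
  by_cases hjk : j = k
  · subst hjk
    by_cases hli : i = l
    · subst hli
      rw [single_mul_single_same, single_mul_single_same]
      by_cases hij : i = j
      · subst hij
        rw [← single_add, mu_diag T hadd hz i (r*s + s*r)]
        obtain ⟨j', hj'⟩ := exists_ne i
        rw [fB_symm T (E i i r) (E i i s), M3 T hadd hz hj' s r]
      · rw [hadd, show (T (E i i (r*s)) + T (E j j (s*r))) * T 1
            + T 1 * (T (E i i (r*s)) + T (E j j (s*r)))
            = (T (E i i (r*s)) * T 1 + T 1 * T (E i i (r*s)))
              + (T (E j j (s*r)) * T 1 + T 1 * T (E j j (s*r))) from by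
              rw [add_mul, mul_add]; abel,
          mu_diag T hadd hz i (r*s), mu_diag T hadd hz j (s*r),
          Mc T hadd hz hij r s, fB_symm T (E i i 1) (E i i (r*s))]
    · have hil : i ≠ l := hli
      rw [single_mul_single_same, single_mul_single_of_ne _ _ _ _ (Ne.symm hil), add_zero,
        mu_off T hadd hz hil (r*s)]
      by_cases hij : i = j
      · subst hij
        rw [U2 T hadd hz hil r s]
      · by_cases hjl : j = l
        · subst hjl
          rw [U1 T hadd hz hil r s]
        · rw [F4 T hadd hz hjl hil r s]
  · by_cases hli : i = l
    · subst hli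
      have hkj : k ≠ j := fun h => hjk h.symm
      rw [single_mul_single_of_ne _ _ _ _ hjk, single_mul_single_same, zero_add,
        mu_off T hadd hz hkj (s*r)]
      by_cases hki : i = k
      · subst hki
        have hij : i ≠ j := fun h => hjk h.symm
        rw [U3 T hadd hz hij r s]
      · by_cases hij : i = j
        · subst hij
          have hki' : k ≠ i := fun h => hki h.symm
          rw [fB_symm T (E i i r) (E k i s), U1 T hadd hz hki' s r]
        · rw [fB_symm T (E i j r) (E k i s),
            F4 T hadd hz (fun h : i = j => hij h) (fun h : k = j => hjk h.symm) s r]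
    · have hli' : l ≠ i := fun h => hli h.symm
      rw [single_mul_single_of_ne _ _ _ _ hjk, single_mul_single_of_ne _ _ _ _ hli',
        add_zero, t0 T hadd, F1 T hz i j k l hjk hli' r s]
      simp

theorem Gfull (hn : 2 ≤ n) (x y : Matrix (Fin n) (Fin n) R) :
    fB T x y + fB T x y
      = T (x * y + y * x) * T 1 + T 1 * T (x * y + y * x) := by
  have key : ∀ i j (r : R), ∀ z, fB T (E i j r) z + fB T (E i j r) z
      = T (E i j r * z + z * E i j r) * T 1 + T 1 * T (E i j r * z + z * E i j r) := by
    intro i j r z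
    induction z using Matrix.induction_on' with
    | h_zero => simp [fB, t0 T hadd]
    | h_add p q hp hq =>
      calc fB T (E i j r) (p + q) + fB T (E i j r) (p + q)
          = (fB T (E i j r) p + fB T (E i j r) p)
            + (fB T (E i j r) q + fB T (E i j r) q) := by
            rw [fB_add_right T hadd]; abel
        _ = (T (E i j r * p + p * E i j r) * T 1 + T 1 * T (E i j r * p + p * E i j r))
            + (T (E i j r * q + q * E i j r) * T 1
              + T 1 * T (E i j r * q + q * E i j r)) := by rw [hp, hq]
        _ = T (E i j r * (p + q) + (p + q) * E i j r) * T 1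
            + T 1 * T (E i j r * (p + q) + (p + q) * E i j r) := by
            have e1 : T (E i j r * (p + q) + (p + q) * E i j r)
                = T (E i j r * p + p * E i j r) + T (E i j r * q + q * E i j r) := by
              rw [show E i j r * (p + q) + (p + q) * E i j r
                = (E i j r * p + p * E i j r) + (E i j r * q + q * E i j r) from by
                rw [mul_add, add_mul]; abel, hadd]
            rw [e1, add_mul, mul_add]
            abel
    | h_std_basis k l s => exact Gunits T hadd hz hn i j k l r s
  induction x using Matrix.induction_on' with
  | h_zero => simp [fB, t0 T hadd]
  | h_add p q hp hq =>
    calc fB T (p + q) y + fB T (p + q) y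
        = (fB T p y + fB T p y) + (fB T q y + fB T q y) := by
          rw [fB_add_left T hadd]; abel
      _ = (T (p * y + y * p) * T 1 + T 1 * T (p * y + y * p))
          + (T (q * y + y * q) * T 1 + T 1 * T (q * y + y * q)) := by rw [hp, hq]
      _ = T ((p + q) * y + y * (p + q)) * T 1 + T 1 * T ((p + q) * y + y * (p + q)) := by
          have e1 : T ((p + q) * y + y * (p + q))
              = T (p * y + y * p) + T (q * y + y * q) := by
            rw [show (p + q) * y + y * (p + q) = (p * y + y * p) + (q * y + y * q) from by
              rw [mul_add, add_mul]; abel, hadd]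
          rw [e1, add_mul, mul_add]
          abel
  | h_std_basis i j r => exact key i j r y

end GU

section P2
variable (T : Matrix (Fin n) (Fin n) R → Matrix (Fin n) (Fin n) R)

theorem half (h2 : IsUnit (2:R)) {m m' : Matrix (Fin n) (Fin n) R}
    (h : m + m = m' + m') : m = m' := by
  have h4 : (2:R) • m = (2:R) • m' := by rw [two_smul, two_smul]; exact h
  have h1 : ((h2.unit⁻¹ : Rˣ) : R) * 2 = 1 := h2.val_inv_mul
  calc m = (1:R) • m := (one_smul R m).symm
    _ = (((h2.unit⁻¹ : Rˣ) : R) * 2) • m := by rw [h1]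
    _ = ((h2.unit⁻¹ : Rˣ) : R) • ((2:R) • m) := by rw [← smul_smul]
    _ = ((h2.unit⁻¹ : Rˣ) : R) • ((2:R) • m') := by rw [h4]
    _ = (((h2.unit⁻¹ : Rˣ) : R) * 2) • m' := by rw [smul_smul]
    _ = (1:R) • m' := by rw [h1]
    _ = m' := one_smul R m'

variable (hadd : ∀ x y, T (x + y) = T x + T y)
variable (hz : ∀ x y : Matrix (Fin n) (Fin n) R,
    x * y = 0 → y * x = 0 → T x * T y + T y * T x = 0)
variable (h2 : IsUnit (2:R)) (hn : 2 ≤ n)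
include hadd hz h2 hn

theorem idem_c2 {e : Matrix (Fin n) (Fin n) R} (he : e * e = e) :
    T 1 * (T 1 * T e) = T e * (T 1 * T 1) := by
  have hG := Gfull T hadd hz hn e e
  rw [he, hadd] at hG
  have hP : T e * T e + T e * T e = T e * T 1 + T 1 * T e := by
    apply half h2
    simp only [fB] at hG
    rw [add_mul, mul_add] at hG
    have hG0 := sub_eq_zero.mpr hG
    rw [← sub_eq_zero]
    abel_nf at hG0 ⊢
    exact hG0
  have l1 := congrArg (fun z => T e * z) hP
  simp only [mul_add] at l1
  have l2 := congrArg (fun z => z * T e) hP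
  simp only [add_mul, mul_assoc] at l2
  have hA : T e * (T e * T 1) = T 1 * (T e * T e) := by
    have h3 := l1.symm.trans l2
    rw [add_comm (T e * (T e * T 1)) (T e * (T 1 * T e))] at h3
    exact add_left_cancel h3
  have m1 := congrArg (fun z => T 1 * z) hP
  simp only [mul_add] at m1
  have m2 := congrArg (fun z => z * T 1) hP
  simp only [add_mul, mul_assoc] at m2
  rw [hA] at m2
  have h4 := m1.symm.trans m2
  rw [add_comm (T 1 * (T e * T 1)) (T 1 * (T 1 * T e))] at h4
  exact add_right_cancel h4

end P2

/-- `etD z` measures failure of `(T 1)^2` to commute with `T z`. -/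
def etD (T : Matrix (Fin n) (Fin n) R → Matrix (Fin n) (Fin n) R)
    (z : Matrix (Fin n) (Fin n) R) : Matrix (Fin n) (Fin n) R :=
  T 1 * (T 1 * T z) - T z * (T 1 * T 1)

section P3
variable (T : Matrix (Fin n) (Fin n) R → Matrix (Fin n) (Fin n) R)
variable (hadd : ∀ x y, T (x + y) = T x + T y)
variable (hz : ∀ x y : Matrix (Fin n) (Fin n) R,
    x * y = 0 → y * x = 0 → T x * T y + T y * T x = 0)
variable (h2 : IsUnit (2:R)) (hn : 2 ≤ n)

include hadd in
theorem etD_add (x y : Matrix (Fin n) (Fin n) R) :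
    etD T (x + y) = etD T x + etD T y := by
  simp only [etD, hadd, mul_add, add_mul]
  abel

include hadd in
theorem etD_zero : etD T 0 = 0 := by
  simp [etD, t0 T hadd]

include hadd hz h2 hn in
theorem etD_idem {e : Matrix (Fin n) (Fin n) R} (he : e * e = e) : etD T e = 0 :=
  sub_eq_zero.mpr (idem_c2 T hadd hz h2 hn he)

include hadd hz h2 hn in
theorem etD_off {k l : Fin n} (hkl : k ≠ l) (u : R) : etD T (E k l u) = 0 := by
  have hidem : (E k k (1:R) + E k l u) * (E k k 1 + E k l u) = E k k 1 + E k l u := by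
    simp only [mul_add, add_mul, single_mul_single_same,
      single_mul_single_of_ne _ _ _ _ (Ne.symm hkl), one_mul, mul_one]
    abel
  have h1 : etD T (E k k (1:R) + E k l u) = 0 := etD_idem T hadd hz h2 hn hidem
  have h2' : etD T (E k k (1:R)) = 0 := etD_idem T hadd hz h2 hn
    (by rw [single_mul_single_same, one_mul])
  rw [etD_add T hadd, h2'] at h1
  simpa using h1

include hadd hz h2 hn in
theorem etD_diag_eq {k l : Fin n} (hkl : k ≠ l) (r : R) :
    etD T (E k k r) = etD T (E l l r) := by
  set v : Matrix (Fin n) (Fin n) R := E k k r + E l k (1-r) with hv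
  set w : Matrix (Fin n) (Fin n) R := E k k (1:R) + E k l (1:R) with hw
  have hwv : w * v = E k k (1:R) := by
    rw [hw, hv]
    simp only [mul_add, add_mul, single_mul_single_same,
      single_mul_single_of_ne _ _ _ _ hkl, single_mul_single_of_ne _ _ _ _ (Ne.symm hkl),
      one_mul, mul_one, add_zero, zero_add]
    rw [← single_add, show r + (1 - r) = (1:R) from by abel]
  have hvk : v * E k k (1:R) = v := by
    rw [hv]
    simp only [add_mul, single_mul_single_same, mul_one]
  have hidem : (v * w) * (v * w) = v * w := by
    rw [show v * w * (v * w) = v * (w * v) * w from by rw [mul_assoc, mul_assoc, mul_assoc],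
      hwv, hvk]
  have hq : v * w = E k k r + E k l r + E l k (1-r) + E l l (1-r) := by
    rw [hv, hw]
    simp only [mul_add, add_mul, single_mul_single_same, mul_one]
    abel
  have h1 : etD T (E k k r + E k l r + E l k (1-r) + E l l (1-r)) = 0 := by
    rw [← hq]; exact etD_idem T hadd hz h2 hn hidem
  rw [etD_add T hadd, etD_add T hadd, etD_add T hadd,
    etD_off T hadd hz h2 hn hkl, etD_off T hadd hz h2 hn (Ne.symm hkl)] at h1
  have h3 : etD T (E l l (1-r)) + etD T (E l l r) = 0 := by
    rw [← etD_add T hadd, ← single_add, sub_add_cancel]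
    exact etD_idem T hadd hz h2 hn (by rw [single_mul_single_same, one_mul])
  have h4 : etD T (E l l (1-r)) = - etD T (E l l r) := by
    rw [eq_neg_iff_add_eq_zero]; exact h3
  rw [h4] at h1
  rw [← sub_eq_zero]
  abel_nf at h1 ⊢
  exact h1

include hadd hz hn in
theorem Delta2 (x y : Matrix (Fin n) (Fin n) R) :
    etD T (x*y + y*x) * T 1 + T 1 * etD T (x*y + y*x)
      = (etD T x * T y + T y * etD T x + (etD T y * T x + T x * etD T y))
        + (etD T x * T y + T y * etD T x + (etD T y * T x + T x * etD T y)) := by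
  have hG := Gfull T hadd hz hn x y
  have h := congrArg (fun z => T 1 * (T 1 * z) - z * (T 1 * T 1)) hG
  simp only [fB, etD] at h ⊢
  simp only [mul_add, add_mul, mul_sub, sub_mul, mul_assoc] at h ⊢
  have h0 := sub_eq_zero.mpr h.symm
  rw [← sub_eq_zero]
  abel_nf at h0 ⊢
  exact h0

include h2 in
theorem halfz {m : Matrix (Fin n) (Fin n) R} (h : m + m = 0) : m = 0 :=
  half h2 (by rw [h, add_zero])

end P3

end Stmt6Proof

local notation "E" => Matrix.single

open Stmt6Proof Matrix

/-- Let `R` be a unital ring with `2` invertible and `A = Mₙ(R)`, `n ≥ 2`.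
Every surjective additive `T : A → A` with `T x ∘ T y = 0` whenever `xy = yx = 0`
is a weighted Jordan homomorphism. -/
theorem stmt6 {R : Type*} [Ring R] (h2 : IsUnit (2 : R)) (n : ℕ) (hn : 2 ≤ n)
    (T : Matrix (Fin n) (Fin n) R → Matrix (Fin n) (Fin n) R)
    (hadd : ∀ x y, T (x + y) = T x + T y)
    (hsurj : Function.Surjective T)
    (hz : ∀ x y, x * y = 0 → y * x = 0 → T x * T y + T y * T x = 0) :
    T 1 ∈ Set.center (Matrix (Fin n) (Fin n) R) ∧ IsUnit (T 1) ∧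
      ∀ x y, T 1 * T (x * y + y * x) = T x * T y + T y * T x := by
  classical
  have h0n : 0 < n := by omega
  have h1n : 1 < n := hn
  set k0 : Fin n := ⟨0, h0n⟩ with hk0
  set k1 : Fin n := ⟨1, h1n⟩ with hk1
  have hk : k0 ≠ k1 := by simp [hk0, hk1, Fin.ext_iff]
  obtain ⟨u, hu⟩ := hsurj 1
  -- all diagonal eta-values coincide
  have hdiag : ∀ (k : Fin n) (r : R),
      etD T (E k k r) = etD T (E k0 k0 r) := by
    intro k r
    by_cases hkk : k = k0
    · subst hkk; rfl
    · exact etD_diag_eq T hadd hz h2 hn hkk r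
  -- (i) : eta-diag anticommutes with c
  have hi : ∀ r : R, etD T (E k0 k0 r) * T 1 + T 1 * etD T (E k0 k0 r) = 0 := by
    intro r
    have hD := Delta2 T hadd hz hn (E k0 k1 (1:R)) (E k1 k0 r)
    simp only [single_mul_single_same, one_mul, mul_one] at hD
    rw [etD_add T hadd, hdiag k1 r,
      etD_off T hadd hz h2 hn hk (1:R), etD_off T hadd hz h2 hn (Ne.symm hk) r] at hD
    simp only [zero_mul, mul_zero, add_zero, zero_add] at hD
    apply halfz h2
    rw [add_mul, mul_add] at hD
    rw [← sub_eq_zero]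
    have hD0 := hD
    abel_nf at hD0 ⊢
    exact hD0
  -- (iii) : eta-diag anticommutes with off-diagonal unit images
  have hiii : ∀ (r s : R) (k l : Fin n), k ≠ l →
      etD T (E k0 k0 r) * T (E k l s) + T (E k l s) * etD T (E k0 k0 r) = 0 := by
    intro r s k l hkl
    have hD := Delta2 T hadd hz hn (E k k r) (E k l s)
    rw [single_mul_single_same, single_mul_single_of_ne _ _ _ _ (Ne.symm hkl),
      add_zero] at hD
    rw [etD_off T hadd hz h2 hn hkl (r*s), etD_off T hadd hz h2 hn hkl s,
      hdiag k r] at hD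
    simp only [zero_mul, mul_zero, add_zero, zero_add] at hD
    exact halfz h2 hD.symm
  -- (v)
  have hv : ∀ r s : R,
      (etD T (E k0 k0 r) * T (E k0 k0 s) + T (E k0 k0 s) * etD T (E k0 k0 r))
      + (etD T (E k0 k0 s) * T (E k0 k0 r) + T (E k0 k0 r) * etD T (E k0 k0 s)) = 0 := by
    intro r s
    have hD := Delta2 T hadd hz hn (E k0 k0 r) (E k0 k0 s)
    rw [single_mul_single_same, single_mul_single_same, ← single_add] at hD
    rw [hi (r*s + s*r)] at hD  -- wrong: LHS of hD is the anticommutator expression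
    exact halfz h2 hD.symm
  -- (iv) + (v) : independence of the diagonal position
  have hAf_all : ∀ (l : Fin n) (r s : R),
      etD T (E k0 k0 r) * T (E l l s) + T (E l l s) * etD T (E k0 k0 r)
      = etD T (E k0 k0 r) * T (E k0 k0 s) + T (E k0 k0 s) * etD T (E k0 k0 r) := by
    intro l r s
    by_cases hl : l = k0
    · subst hl; rfl
    · have hD := Delta2 T hadd hz hn (E k0 k0 r) (E l l s)
      rw [single_mul_single_of_ne _ _ _ _ (fun h => hl h.symm),
        single_mul_single_of_ne _ _ _ _ hl, add_zero, etD_zero T hadd,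
        hdiag l s] at hD
      simp only [zero_mul, mul_zero, add_zero, zero_add] at hD
      have e1 := halfz h2 hD.symm
      have e2 := hv r s
      have e3 := e1.trans e2.symm
      exact add_right_cancel e3
  -- trace lemma
  have htr : ∀ (r : R) (x : Matrix (Fin n) (Fin n) R),
      etD T (E k0 k0 r) * T x + T x * etD T (E k0 k0 r)
      = etD T (E k0 k0 r) * T (E k0 k0 (∑ m, x m m))
        + T (E k0 k0 (∑ m, x m m)) * etD T (E k0 k0 r) := by
    intro r x
    induction x using Matrix.induction_on' with
    | h_zero =>
      have hz0 : (∑ m, (0 : Matrix (Fin n) (Fin n) R) m m) = 0 := by simp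
      rw [hz0, single_zero, t0 T hadd]
    | h_add p q hp hq =>
      have hsum : (∑ m, (p + q) m m) = (∑ m, p m m) + (∑ m, q m m) := by
        simp [Matrix.add_apply, Finset.sum_add_distrib]
      rw [hsum, single_add, hadd, hadd, mul_add, add_mul, mul_add, add_mul]
      have hpq := congrArg₂ (fun a b => a + b) hp hq
      beta_reduce at hpq
      have h0 := sub_eq_zero.mpr hpq
      rw [← sub_eq_zero]
      abel_nf at h0 ⊢
      exact h0
    | h_std_basis i' j' s =>
      by_cases hij' : i' = j'
      · subst hij'
        have hdsum : (∑ m, (E i' i' s) m m) = s := by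
          rw [Finset.sum_eq_single_of_mem i' (Finset.mem_univ i')
            (fun m _ hm => single_apply_of_ne i' i' s m m
              (fun hc => hm (hc.1.symm)))]
          simp
        rw [hdsum]
        exact hAf_all i' r s
      · have hdsum : (∑ m, (E i' j' s) m m) = 0 := by
          apply Finset.sum_eq_zero
          intro m _
          exact single_apply_of_ne i' j' s m m
            (fun hc => hij' (hc.1.trans hc.2.symm))
        rw [hdsum, single_zero, t0 T hadd, hiii r s i' j' hij']
        simp
  -- conclude eta-diag vanishes identically
  have hedz : ∀ r : R, etD T (E k0 k0 r) = 0 := by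
    have h1r : ∀ r : R, etD T (E k0 k0 r) + etD T (E k0 k0 r)
        = etD T (E k0 k0 r) * T (E k0 k0 (∑ m, u m m))
          + T (E k0 k0 (∑ m, u m m)) * etD T (E k0 k0 r) := by
      intro r
      have := htr r u
      rwa [hu, mul_one, one_mul] at this
    have hAfanti := hv
    have hAfττ : etD T (E k0 k0 (∑ m, u m m)) * T (E k0 k0 (∑ m, u m m))
        + T (E k0 k0 (∑ m, u m m)) * etD T (E k0 k0 (∑ m, u m m)) = 0 :=
      halfz h2 (hv (∑ m, u m m) (∑ m, u m m))
    have hτ : etD T (E k0 k0 (∑ m, u m m)) = 0 :=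
      halfz h2 ((h1r (∑ m, u m m)).trans hAfττ)
    intro r
    have hrτ : etD T (E k0 k0 r) * T (E k0 k0 (∑ m, u m m))
        + T (E k0 k0 (∑ m, u m m)) * etD T (E k0 k0 r) = 0 := by
      have := hv r (∑ m, u m m)
      rw [hτ] at this
      simp only [zero_mul, mul_zero, add_zero, zero_add] at this
      exact this
    exact halfz h2 ((h1r r).trans hrτ)
  -- c^2 commutes with everything
  have hc2x : ∀ x, etD T x = 0 := by
    intro x
    induction x using Matrix.induction_on' with
    | h_zero => exact etD_zero T hadd
    | h_add p q hp hq => rw [etD_add T hadd, hp, hq, add_zero]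
    | h_std_basis i' j' s =>
      by_cases hij' : i' = j'
      · subst hij'; rw [hdiag i' s]; exact hedz s
      · exact etD_off T hadd hz h2 hn hij' s
  have hc2 : ∀ v : Matrix (Fin n) (Fin n) R,
      T 1 * (T 1 * v) = v * (T 1 * T 1) := by
    intro v
    obtain ⟨x, rfl⟩ := hsurj v
    exact sub_eq_zero.mp (hc2x x)
  -- c commutes with squares
  have hcsq : ∀ x, T 1 * (T x * T x) = (T x * T x) * T 1 := by
    intro x
    have hG := Gfull T hadd hz hn x x
    have h := congrArg (fun z => T 1 * z - z * T 1) hG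
    simp only [fB] at h
    have hr0 : T 1 * (T (x*x + x*x) * T 1 + T 1 * T (x*x+x*x))
        - (T (x*x+x*x) * T 1 + T 1 * T (x*x+x*x)) * T 1 = 0 := by
      rw [mul_add, add_mul, hc2 (T (x*x+x*x)), mul_assoc, mul_assoc]
      abel
    rw [hr0] at h
    have hX2 : ((T 1 * (T x * T x) - (T x * T x) * T 1)
        + (T 1 * (T x * T x) - (T x * T x) * T 1))
        + ((T 1 * (T x * T x) - (T x * T x) * T 1)
        + (T 1 * (T x * T x) - (T x * T x) * T 1)) = 0 := by
      simp only [mul_add, add_mul] at h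
      abel_nf at h ⊢
      exact h
    exact sub_eq_zero.mp (halfz h2 (halfz h2 hX2))
  -- c is central
  have hcentral : ∀ v : Matrix (Fin n) (Fin n) R, T 1 * v = v * T 1 := by
    intro v
    obtain ⟨x, rfl⟩ := hsurj v
    have h1 := hcsq (x + u)
    rw [hadd, hu] at h1
    have hexp : (T x + 1) * (T x + 1) = T x * T x + (T x + T x + 1) := by
      simp only [mul_add, add_mul, mul_one, one_mul]
      abel
    rw [hexp] at h1
    rw [mul_add, add_mul, hcsq x] at h1
    have h3 := add_left_cancel h1
    simp only [mul_add, add_mul, mul_one, one_mul] at h3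
    have h4 := add_right_cancel h3
    exact half h2 h4
  refine ⟨Semigroup.mem_center_iff.mpr (fun g => (hcentral g).symm), ?_, ?_⟩
  · have hG := Gfull T hadd hz hn u u
    rw [hadd] at hG
    simp only [fB, hu, one_mul] at hG
    rw [← hcentral (T (u*u) + T (u*u))] at hG
    have h5 := half h2 hG
    rw [mul_add] at h5
    have h6 := half h2 h5
    exact ⟨⟨T 1, T (u*u), h6.symm, by rw [← hcentral (T (u*u))]; exact h6.symm⟩, rfl⟩
  · intro x y
    have hG := Gfull T hadd hz hn x y
    rw [← hcentral (T (x*y + y*x))] at hG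
    exact (half h2 hG).symm
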